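/- Let u be a term whose only free variable is x and let A be a closed term. If u[x:=A] is unsolvable, then u[x:=Ω] is unsolvable. -/

import Mathlib

/-! ## A de Bruijn presentation of the untyped λ-calculus -/

/-- Untyped λ-terms in de Bruijn representation. -/
inductive Lam : Type where
  | var : ℕ → Lam
  | app : Lam → Lam → Lam
  | abs : Lam → Lam
  deriving DecidableEq

namespace Lam

/-- Lifting of de Bruijn indices (cutoff `d`). -/
def lift (d : ℕ) : Lam → Lam
  | var n => if n < d then var n else var (n + 1)
  | app a b => app (lift d a) (lift d b)
  | abs a => abs (lift (d + 1) a)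

/-- Capture-avoiding substitution of `u` for the free variable `k`. -/
def subst : Lam → ℕ → Lam → Lam
  | var n, k, u => if n = k then u else if k < n then var (n - 1) else var n
  | app a b, k, u => app (subst a k u) (subst b k u)
  | abs a, k, u => abs (subst a (k + 1) (lift 0 u))

/-- One-step β-reduction `▷`. -/
inductive Step : Lam → Lam → Prop
  | beta (a b : Lam) : Step (app (abs a) b) (subst a 0 b)
  | appL {a a' : Lam} (b : Lam) : Step a a' → Step (app a b) (app a' b)
  | appR (a : Lam) {b b' : Lam} : Step b b' → Step (app a b) (app a b')
  | abs {a a' : Lam} : Step a a' → Step (Lam.abs a) (Lam.abs a')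

/-- β-reduction `▷*` : reflexive and transitive closure of `▷`. -/
def Steps : Lam → Lam → Prop := Relation.ReflTransGen Step

/-- β-normal term. -/
def Normal (t : Lam) : Prop := ∀ t', ¬ Step t t'

/-- `Free x t` : the variable `x` (de Bruijn index, seen from the root) occurs free in `t`. -/
def Free : ℕ → Lam → Prop
  | x, var n => x = n
  | x, app a b => Free x a ∨ Free x b
  | x, abs a => Free (x + 1) a

/-- Closed term. -/
def Closed (t : Lam) : Prop := ∀ x, ¬ Free x t

/-- A variable applied to a (possibly empty) list of arguments. -/
inductive HeadVarApp : Lam → Prop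
  | var (n : ℕ) : HeadVarApp (var n)
  | app {a : Lam} (b : Lam) : HeadVarApp a → HeadVarApp (app a b)

/-- Head normal forms `λx₁…λxₙ.(y t₁ … tₘ)`. -/
inductive IsHNF : Lam → Prop
  | head {t : Lam} : HeadVarApp t → IsHNF t
  | abs {a : Lam} : IsHNF a → IsHNF (Lam.abs a)

/-- A term is solvable if it β-reduces to a head normal form. -/
def Solvable (t : Lam) : Prop := ∃ h, Steps t h ∧ IsHNF h

/-- `Ω = (λx.(x x))(λx.(x x))`. -/
def Omega : Lam := app (abs (app (var 0) (var 0))) (abs (app (var 0) (var 0)))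

/-- Ω-reduction `▷_Ω` : replace an unsolvable subterm by `Ω`. -/
inductive OmegaStep : Lam → Lam → Prop
  | unsolv {t : Lam} : ¬ Solvable t → OmegaStep t Omega
  | appL {a a' : Lam} (b : Lam) : OmegaStep a a' → OmegaStep (app a b) (app a' b)
  | appR (a : Lam) {b b' : Lam} : OmegaStep b b' → OmegaStep (app a b) (app a b')
  | abs {a a' : Lam} : OmegaStep a a' → OmegaStep (Lam.abs a) (Lam.abs a')

/-- `▷_Ω*`. -/
def OmegaSteps : Lam → Lam → Prop := Relation.ReflTransGen OmegaStep

/-- `▷_{βΩ}` : union of `▷` and `▷_Ω`. -/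
def BOStep (t t' : Lam) : Prop := Step t t' ∨ OmegaStep t t'

/-- `▷_{βΩ}*`. -/
def BOSteps : Lam → Lam → Prop := Relation.ReflTransGen BOStep

/-- `u ≃ v` : equality in the λ-theory H (common `▷_{βΩ}*`-reduct). -/
def SimH (u v : Lam) : Prop := ∃ w, BOSteps u w ∧ BOSteps v w

/-- Simultaneous (parallel) substitution along `σ`. -/
def psubst (σ : ℕ → Lam) : Lam → Lam
  | var n => σ n
  | app a b => app (psubst σ a) (psubst σ b)
  | abs a => abs (psubst (fun n => match n with | 0 => var 0 | m + 1 => lift 0 (σ m)) a)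

/-- `(x V)` : the application of a head `h` to a list of arguments. -/
def mkApps (h : Lam) (as : List Lam) : Lam := as.foldl app h

/-- `U ⊑ V` : some initial segment of `V` is obtained from `U` by a substitution
followed by componentwise β-reductions. -/
def Sqsubseteq (U V : List Lam) : Prop :=
  ∃ (σ : ℕ → Lam) (W : List Lam), W <+: V ∧
    List.Forall₂ (fun u w => Steps (psubst σ u) w) U W

/-! ### Occurrences as positions -/

/-- Directions inside a term. -/
inductive Dir : Type where
  | left | right | down
  deriving DecidableEq

/-- Positions (occurrences) in a term. -/
abbrev Pos := List Dir

/-- The subterm of `t` at position `p` (if any). -/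
def subtermAt : Lam → Pos → Option Lam
  | t, [] => some t
  | app a _, Dir.left :: p => subtermAt a p
  | app _ b, Dir.right :: p => subtermAt b p
  | abs a, Dir.down :: p => subtermAt a p
  | _, _ :: _ => none

/-- Replace the subterm of `t` at position `p` by `s` (if the position exists). -/
def replaceAt : Lam → Pos → Lam → Option Lam
  | _, [], s => some s
  | app a b, Dir.left :: p, s => (replaceAt a p s).map (fun a' => app a' b)
  | app a b, Dir.right :: p, s => (replaceAt b p s).map (fun b' => app a b')
  | abs a, Dir.down :: p, s => (replaceAt a p s).map Lam.abs
  | _, _ :: _, _ => none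

/-- `OccOf x t p` : position `p` is an occurrence in `t` of the free variable `x`
(index seen from the root, hence shifted by the number of binders crossed). -/
def OccOf (x : ℕ) (t : Lam) (p : Pos) : Prop :=
  subtermAt t p = some (var (x + p.count Dir.down))

/-- `ArgOf t p V` : `V` is the maximal list of arguments, in `t`, of the occurrence
sitting at position `p`; i.e. `([] V)` is the applicative context of that occurrence. -/
def ArgOf (t : Lam) (p : Pos) (V : List Lam) : Prop :=
  ∃ (q : Pos) (h : Lam),
    p = q ++ List.replicate V.length Dir.left ∧
    (∀ q' : Pos, q ≠ q' ++ [Dir.left]) ∧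
    subtermAt t q = some (mkApps h V) ∧ subtermAt t p = some h

/-- `InArgOfOcc x t p q` : `q` is an occurrence of `x` in `t` and the position `p` lies
inside one of the elements of `Arg(x_[q], t)`. -/
def InArgOfOcc (x : ℕ) (t : Lam) (p q : Pos) : Prop :=
  OccOf x t q ∧ ∃ (r : Pos) (n : ℕ),
    q = r ++ List.replicate n Dir.left ∧
    (∀ r' : Pos, r ≠ r' ++ [Dir.left]) ∧
    ∃ (j : ℕ) (s : Pos), j < n ∧ p = r ++ List.replicate j Dir.left ++ Dir.right :: s

/-- The occurrence `p` of `x` is pure in `t` : no other occurrence `q` of `x` in `t`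
is such that `p` occurs in one of the elements of `Arg(x_[q], t)`. -/
def PureOcc (x : ℕ) (t : Lam) (p : Pos) : Prop :=
  OccOf x t p ∧ ∀ q, q ≠ p → ¬ InArgOfOcc x t p q

/-- Renaming of the free variable `y` into `x`. -/
def rename (y x : ℕ) : Lam → Lam
  | var n => if n = y then var x else var n
  | app a b => app (rename y x a) (rename y x b)
  | abs a => abs (rename (y + 1) (x + 1) a)

/-- `Residue x u v p p'` : along some β-reduction from `u` to `v`, the occurrence `p'` of
`x` in `v` is a residue (traced copy) of the occurrence `p` of `x` in `u`.  This is
expressed by marking the occurrence `p` of `x` with a fresh variable `y` and tracing the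
occurrences of `y`. -/
def Residue (x : ℕ) (u v : Lam) (p p' : Pos) : Prop :=
  ∃ (y : ℕ) (u₀ v₀ : Lam),
    ¬ Free y u ∧
    replaceAt u p (var (y + p.count Dir.down)) = some u₀ ∧
    Steps u₀ v₀ ∧ rename y x v₀ = v ∧ OccOf y v₀ p'

/-- The occurrence `p` of the free variable `0` ("x") in `G` is good with respect to the
closed term `A` : it is pure in `G` and `u[x:=A]` is solvable for every subterm `u` of
`G` in which this occurrence occurs. -/
def GoodOcc (A G : Lam) (p : Pos) : Prop :=
  PureOcc 0 G p ∧
    ∀ (q : Pos) (u : Lam), q <+: p → subtermAt G q = some u →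
      Solvable (subst u (q.count Dir.down) A)

/-! ### Miscellaneous -/

/-- A fixed effective Gödel numbering of λ-terms. -/
def code : Lam → ℕ
  | var n => Nat.pair 0 n
  | app a b => Nat.pair 1 (Nat.pair (code a) (code b))
  | abs a => Nat.pair 2 (code a)

/-- Body `f^k z` of the Church numeral. -/
def churchBody : ℕ → Lam
  | 0 => var 0
  | k + 1 => app (var 1) (churchBody k)

/-- The Church numeral `c_k = λf λz.(f^k z)`. -/
def church (k : ℕ) : Lam := abs (abs (churchBody k))

/-- `n`-fold abstraction `λx₁…λxₙ.t`. -/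
def absN : ℕ → Lam → Lam
  | 0, t => t
  | n + 1, t => abs (absN n t)

/-- Number of symbols of a term. -/
def size : Lam → ℕ
  | var _ => 1
  | app a b => size a + size b + 1
  | abs a => size a + 1

/-- Subterm relation. -/
inductive Subterm : Lam → Lam → Prop
  | refl (t : Lam) : Subterm t t
  | appL {s a : Lam} (b : Lam) : Subterm s a → Subterm s (app a b)
  | appR (a : Lam) {s b : Lam} : Subterm s b → Subterm s (app a b)
  | abs {s a : Lam} : Subterm s a → Subterm s (Lam.abs a)

/-- `t` contains no subterm of the form `(x u)` for the free variable `x`. -/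
def NoVarApp : ℕ → Lam → Prop
  | _, var _ => True
  | x, app a b => a ≠ var x ∧ NoVarApp x a ∧ NoVarApp x b
  | x, abs a => NoVarApp (x + 1) a

/-- Headed by the variable `d` : term of the form `(x V)` with `x = var d`. -/
inductive Headed : ℕ → Lam → Prop
  | var (d : ℕ) : Headed d (var d)
  | app {d : ℕ} {a : Lam} (b : Lam) : Headed d a → Headed d (app a b)

end Lam

namespace Lam

lemma subst_var_self (k : ℕ) (u : Lam) : subst (var k) k u = u := by simp [subst]

lemma subst_var_lt {m k : ℕ} (h : m < k) (u : Lam) : subst (var m) k u = var m := by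
  simp only [subst]; rw [if_neg (by omega), if_neg (by omega)]

lemma subst_var_gt {m k : ℕ} (h : k < m) (u : Lam) : subst (var m) k u = var (m-1) := by
  simp only [subst]; rw [if_neg (by omega), if_pos h]

lemma lift_var_lt {m d : ℕ} (h : m < d) : lift d (var m) = var m := by
  simp only [lift]; rw [if_pos h]

lemma lift_var_ge {m d : ℕ} (h : d ≤ m) : lift d (var m) = var (m+1) := by
  simp only [lift]; rw [if_neg (by omega)]

lemma lift_of_lt : ∀ (t : Lam) (d : ℕ), (∀ x, Free x t → x < d) → lift d t = t := by
  intro t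
  induction t with
  | var n => intro d h; exact lift_var_lt (h n rfl)
  | app a b iha ihb =>
      intro d h
      simp [lift, iha d (fun x hx => h x (Or.inl hx)), ihb d (fun x hx => h x (Or.inr hx))]
  | abs a ih =>
      intro d h
      simp only [lift, abs.injEq]
      exact ih (d+1) (fun x hx => by
        cases x with
        | zero => omega
        | succ y => exact Nat.succ_lt_succ (h y hx))

lemma subst_of_lt : ∀ (t : Lam) (k : ℕ) (u : Lam), (∀ x, Free x t → x < k) → subst t k u = t := by
  intro t
  induction t with
  | var n => intro k u h; exact subst_var_lt (h n rfl) u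
  | app a b iha ihb =>
      intro k u h
      simp [subst, iha k u (fun x hx => h x (Or.inl hx)), ihb k u (fun x hx => h x (Or.inr hx))]
  | abs a ih =>
      intro k u h
      simp only [subst, abs.injEq]
      exact ih (k+1) _ (fun x hx => by
        cases x with
        | zero => omega
        | succ y => exact Nat.succ_lt_succ (h y hx))

lemma lift_closed {c : Lam} (hc : Closed c) (d : ℕ) : lift d c = c :=
  lift_of_lt c d (fun x hx => absurd hx (hc x))

lemma subst_closed {c : Lam} (hc : Closed c) (k : ℕ) (u : Lam) : subst c k u = c :=
  subst_of_lt c k u (fun x hx => absurd hx (hc x))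

lemma subst_lift_comm {c : Lam} (hc : Closed c) :
    ∀ (t : Lam) (d k : ℕ), d ≤ k → subst (lift d t) (k+1) c = lift d (subst t k c) := by
  intro t
  induction t with
  | var n =>
      intro d k hdk
      by_cases h1 : n < d
      · rw [lift_var_lt h1, subst_var_lt (by omega), subst_var_lt (by omega), lift_var_lt h1]
      · rw [lift_var_ge (by omega)]
        by_cases h2 : n = k
        · subst h2
          rw [subst_var_self, subst_var_self, lift_closed hc]
        · by_cases h3 : k < n
          · rw [subst_var_gt (by omega), subst_var_gt h3, lift_var_ge (by omega)]
            congr 1; omega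
          · rw [subst_var_lt (by omega), subst_var_lt (by omega), lift_var_ge (by omega)]
  | app a b iha ihb => intro d k hdk; simp [lift, subst, iha _ _ hdk, ihb _ _ hdk]
  | abs a ih =>
      intro d k hdk
      simp only [lift, subst, abs.injEq]
      rw [lift_closed hc]
      exact ih (d+1) (k+1) (by omega)

lemma subst_subst {c : Lam} (hc : Closed c) :
    ∀ (t b : Lam) (i k : ℕ), i ≤ k →
      subst (subst t i b) k c = subst (subst t (k+1) c) i (subst b k c) := by
  intro t
  induction t with
  | var n =>
      intro b i k hik
      by_cases h1 : n = i
      · subst h1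
        rw [subst_var_self, subst_var_lt (by omega), subst_var_self]
      · by_cases h2 : n = k + 1
        · subst h2
          rw [subst_var_gt (by omega), subst_var_self, subst_closed hc]
          have : k + 1 - 1 = k := by omega
          rw [this, subst_var_self]
        · by_cases h3 : n < i
          · rw [subst_var_lt (by omega), subst_var_lt (by omega), subst_var_lt (by omega),
              subst_var_lt (by omega)]
          · by_cases h4 : n < k + 1
            · rw [subst_var_gt (by omega), subst_var_lt (by omega), subst_var_lt (by omega),
                subst_var_gt (by omega)]
            · rw [subst_var_gt (by omega), subst_var_gt (by omega), subst_var_gt (by omega),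
                subst_var_gt (by omega)]
  | app a b iha ihb => intro b' i k hik; simp [subst, iha _ _ _ hik, ihb _ _ _ hik]
  | abs a ih =>
      intro b i k hik
      simp only [subst, abs.injEq]
      rw [lift_closed hc, ← subst_lift_comm hc b 0 k (by omega)]
      exact ih (lift 0 b) (i+1) (k+1) (by omega)

end Lam

namespace Lam

lemma steps_appL {a a' : Lam} (b : Lam) (h : Steps a a') : Steps (app a b) (app a' b) :=
  Relation.ReflTransGen.lift (fun t => app t b) (fun _ _ hs => Step.appL b hs) _ _ h

lemma steps_appR (a : Lam) {b b' : Lam} (h : Steps b b') : Steps (app a b) (app a b') :=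
  Relation.ReflTransGen.lift (fun t => app a t) (fun _ _ hs => Step.appR a hs) _ _ h

lemma steps_abs {a a' : Lam} (h : Steps a a') : Steps (abs a) (abs a') :=
  Relation.ReflTransGen.lift Lam.abs (fun _ _ hs => Step.abs hs) _ _ h

lemma step_subst_closed {c : Lam} (hc : Closed c) {a a' : Lam} (h : Step a a') :
    ∀ k, Step (subst a k c) (subst a' k c) := by
  induction h with
  | beta t b =>
      intro k
      have hb := Step.beta (subst t (k+1) (lift 0 c)) (subst b k c)
      rw [lift_closed hc] at hb
      rw [show subst (subst t 0 b) k c = subst (subst t (k+1) c) 0 (subst b k c) from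
        subst_subst hc t b 0 k (by omega)]
      simpa [subst, lift_closed hc] using hb
  | appL b _ ih => intro k; exact Step.appL _ (ih k)
  | appR a _ ih => intro k; exact Step.appR _ (ih k)
  | abs _ ih =>
      intro k
      simp only [subst]
      rw [lift_closed hc]
      exact Step.abs (ih (k+1))

lemma steps_subst_closed {c : Lam} (hc : Closed c) {a a' : Lam} (h : Steps a a') (k : ℕ) :
    Steps (subst a k c) (subst a' k c) :=
  Relation.ReflTransGen.lift (fun t => subst t k c)
    (fun _ _ hs => step_subst_closed hc hs k) _ _ h

lemma Omega_closed : Closed Omega := by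
  intro x hx
  simp [Omega, Free] at hx

lemma lift_Omega (d : ℕ) : lift d Omega = Omega := lift_closed Omega_closed d

lemma step_Omega : ∀ {h : Lam}, Step Omega h → h = Omega := by
  intro h hs
  cases hs with
  | beta a b => rfl
  | appL b hs' =>
      cases hs' with
      | abs hs'' =>
          cases hs'' with
          | appL _ h3 => cases h3
          | appR _ h3 => cases h3
  | appR a hs' =>
      cases hs' with
      | abs hs'' =>
          cases hs'' with
          | appL _ h3 => cases h3
          | appR _ h3 => cases h3

lemma step_subst_Omega : ∀ (w : Lam) (k : ℕ) {h : Lam}, Step (subst w k Omega) h →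
    ∃ w', Steps w w' ∧ h = subst w' k Omega := by
  intro w
  induction w with
  | var n =>
      intro k h hs
      by_cases h1 : n = k
      · subst h1
        rw [subst_var_self] at hs
        exact ⟨var n, Relation.ReflTransGen.refl, by rw [step_Omega hs, subst_var_self]⟩
      · rcases Nat.lt_or_ge n k with h2 | h2
        · rw [subst_var_lt h2] at hs; cases hs
        · rw [subst_var_gt (by omega)] at hs; cases hs
  | app a b iha ihb =>
      intro k h hs
      simp only [subst] at hs
      cases a with
      | var n =>
          by_cases h1 : n = k
          · subst h1
            rw [subst_var_self,
              show Omega = app (abs (app (var 0) (var 0))) (abs (app (var 0) (var 0)))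
                from rfl] at hs
            cases hs with
            | appL _ hs' =>
                have heq := step_Omega hs'
                subst heq
                exact ⟨app (var n) b, Relation.ReflTransGen.refl, by simp [subst]; rfl⟩
            | appR _ hs' =>
                obtain ⟨b', hb', rfl⟩ := ihb n hs'
                exact ⟨app (var n) b', steps_appR _ hb', by simp [subst]; rfl⟩
          · obtain ⟨m, hm⟩ : ∃ m, subst (var n) k Omega = var m := by
              rcases Nat.lt_or_ge n k with h2 | h2
              · exact ⟨n, subst_var_lt h2 _⟩
              · exact ⟨n - 1, subst_var_gt (by omega) _⟩
            rw [hm] at hs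
            cases hs with
            | appL _ hs' => cases hs'
            | appR _ hs' =>
                obtain ⟨b', hb', rfl⟩ := ihb k hs'
                exact ⟨app (var n) b', steps_appR _ hb',
                  by rw [show subst (app (var n) b') k Omega
                      = app (subst (var n) k Omega) (subst b' k Omega) from rfl, hm]⟩
      | app a1 a2 =>
          simp only [subst] at hs
          cases hs with
          | appL _ hs' =>
              obtain ⟨a', ha', rfl⟩ := iha k (by simpa [subst] using hs')
              exact ⟨app a' b, steps_appL b ha', by simp [subst]⟩
          | appR _ hs' =>
              obtain ⟨b', hb', rfl⟩ := ihb k hs'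
              exact ⟨app (app a1 a2) b', steps_appR _ hb', by simp [subst]⟩
      | abs a1 =>
          simp only [subst, lift_Omega] at hs
          cases hs with
          | beta t s =>
              exact ⟨subst a1 0 b, Relation.ReflTransGen.single (Step.beta a1 b),
                (subst_subst Omega_closed a1 b 0 k (by omega)).symm⟩
          | appL _ hs' =>
              obtain ⟨a', ha', rfl⟩ := iha k (by simpa [subst, lift_Omega] using hs')
              exact ⟨app a' b, steps_appL b ha', by simp [subst]⟩
          | appR _ hs' =>
              obtain ⟨b', hb', rfl⟩ := ihb k hs'
              exact ⟨app (abs a1) b', steps_appR _ hb', by simp [subst, lift_Omega]⟩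
  | abs a ih =>
      intro k h hs
      simp only [subst, lift_Omega] at hs
      cases hs with
      | abs hs' =>
          obtain ⟨a', ha', rfl⟩ := ih (k+1) hs'
          exact ⟨abs a', steps_abs ha', by simp [subst, lift_Omega]⟩

lemma steps_subst_Omega : ∀ {w h : Lam} {k : ℕ}, Steps (subst w k Omega) h →
    ∃ w', Steps w w' ∧ h = subst w' k Omega := by
  intro w h k hs
  induction hs with
  | refl => exact ⟨w, Relation.ReflTransGen.refl, rfl⟩
  | tail _ hstep ih =>
      obtain ⟨w₁, hw₁, rfl⟩ := ih
      obtain ⟨w₂, hw₂, rfl⟩ := step_subst_Omega w₁ k hstep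
      exact ⟨w₂, hw₁.trans hw₂, rfl⟩

lemma not_hva_abs {t : Lam} : ¬ HeadVarApp (abs t) := by
  intro h; cases h

lemma hva_subst_Omega : ∀ (w : Lam) (k : ℕ) (c : Lam),
    HeadVarApp (subst w k Omega) → HeadVarApp (subst w k c) := by
  intro w
  induction w with
  | var n =>
      intro k c hv
      by_cases h1 : n = k
      · subst h1
        rw [subst_var_self] at hv
        cases hv with
        | app _ hv' => exact absurd hv' not_hva_abs
      · rcases Nat.lt_or_ge n k with h2 | h2
        · rw [subst_var_lt h2]; exact HeadVarApp.var n
        · rw [subst_var_gt (by omega)]; exact HeadVarApp.var (n-1)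
  | app a b iha ihb =>
      intro k c hv
      simp only [subst] at hv ⊢
      cases hv with
      | app _ hv' => exact HeadVarApp.app _ (iha k c hv')
  | abs a ih =>
      intro k c hv
      simp only [subst] at hv
      exact absurd hv not_hva_abs

lemma hnf_subst_Omega : ∀ (w : Lam) (k : ℕ) (c : Lam),
    IsHNF (subst w k Omega) → IsHNF (subst w k c) := by
  intro w
  induction w with
  | var n =>
      intro k c hv
      by_cases h1 : n = k
      · subst h1
        rw [subst_var_self] at hv
        cases hv with
        | head hv' =>
            cases hv' with
            | app _ hv'' => exact absurd hv'' not_hva_abs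
      · rcases Nat.lt_or_ge n k with h2 | h2
        · rw [subst_var_lt h2]; exact IsHNF.head (HeadVarApp.var n)
        · rw [subst_var_gt (by omega)]; exact IsHNF.head (HeadVarApp.var (n-1))
  | app a b iha ihb =>
      intro k c hv
      cases hv with
      | head hv' => exact IsHNF.head (by simpa [subst] using hva_subst_Omega (app a b) k c (by simpa [subst] using hv'))
  | abs a ih =>
      intro k c hv
      simp only [subst, lift_Omega] at hv
      cases hv with
      | head hv' => exact absurd hv' not_hva_abs
      | abs hv' =>
          simp only [subst]
          exact IsHNF.abs (ih (k+1) (lift 0 c) hv')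

end Lam


open Lam in
/-- if `u` has `x` (index `0`) as its only free variable, `A` is closed
and `u[x:=A]` is unsolvable, then `u[x:=Ω]` is unsolvable. -/
theorem unsolvable_subst_omega (u A : Lam)
    (honly : ∀ y, Free y u → y = 0) (hA : Closed A)
    (h : ¬ Solvable (subst u 0 A)) :
    ¬ Solvable (subst u 0 Omega) := by
  rintro ⟨hnf, hsteps, hhnf⟩
  obtain ⟨w, hw, rfl⟩ := steps_subst_Omega hsteps
  exact h ⟨subst w 0 A, steps_subst_closed hA hw 0, hnf_subst_Omega w 0 A hhnf⟩
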